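/- arXiv:math/0001174 — 2 statements merged into one kernel-verified Lean document; each statement's English description precedes it below -/
import Mathlib

section
/- For the substitution on the alphabet {0,1,2,3,0̃,1̃,2̃,3̃} given by 0→1̃2, 1→03, 2→0̃3̃, 3→1̃2, 0̃→12̃, 1̃→0̃3̃, 2̃→03, 3̃→12̃, the signed count vector n(W) = (n_0 − n_{0̃}, n_1 − n_{1̃}, n_2 − n_{2̃}, n_3 − n_{3̃}) of the k-th iterate of the word '0' equals R_c^k · (1,0,0,0)^T, where R_c = [[0,1,-1,0],[-1,0,0,-1],[1,0,0,1],[0,1,-1,0]]. -/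
/-- The substitution 0→1̃2, 1→03, 2→0̃3̃, 3→1̃2, 0̃→12̃, 1̃→0̃3̃, 2̃→03, 3̃→12̃,
with the alphabet {0,1,2,3,0̃,1̃,2̃,3̃} encoded as Fin 8 (tilde of s is s+4). -/
def sigma14 : Fin 8 → List (Fin 8) :=
  ![[5, 2], [0, 3], [4, 7], [5, 2], [1, 6], [4, 7], [0, 3], [1, 6]]

/-- Signed count vector: `n(W)_s = #s − #s̃`. -/
def signedCount (W : List (Fin 8)) : Fin 4 → ℤ :=
  fun s => (W.count (Fin.castLE (by norm_num) s) : ℤ) - (W.count (s.addNat 4) : ℤ)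

lemma signedCount_append (u v : List (Fin 8)) :
    signedCount (u ++ v) = signedCount u + signedCount v := by
  funext s
  simp [signedCount, List.count_append]
  ring

lemma key (a : Fin 8) :
    signedCount (sigma14 a)
      = (!![0, 1, -1, 0; -1, 0, 0, -1; 1, 0, 0, 1; 0, 1, -1, 0] :
          Matrix (Fin 4) (Fin 4) ℤ).mulVec (signedCount [a]) := by
  funext s
  fin_cases a <;> fin_cases s <;>
    simp [signedCount, sigma14, Matrix.mulVec, dotProduct, Fin.sum_univ_succ,
      List.count_cons, Fin.castLE, Fin.addNat] <;> decide

lemma step (W : List (Fin 8)) :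
    signedCount (W.flatMap sigma14)
      = (!![0, 1, -1, 0; -1, 0, 0, -1; 1, 0, 0, 1; 0, 1, -1, 0] :
          Matrix (Fin 4) (Fin 4) ℤ).mulVec (signedCount W) := by
  induction W with
  | nil =>
      funext s
      simp [signedCount, Matrix.mulVec, dotProduct, Fin.sum_univ_succ]
  | cons a W ih =>
      have h1 : (a :: W).flatMap sigma14 = sigma14 a ++ W.flatMap sigma14 := rfl
      have h2 : (a :: W) = [a] ++ W := rfl
      rw [h1, signedCount_append, ih, h2, signedCount_append, Matrix.mulVec_add, key]

theorem stmt14 (k : ℕ) :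
    signedCount ((fun W : List (Fin 8) => W.flatMap sigma14)^[k] [0])
      = ((!![0, 1, -1, 0; -1, 0, 0, -1; 1, 0, 0, 1; 0, 1, -1, 0] :
          Matrix (Fin 4) (Fin 4) ℤ) ^ k).mulVec ![1, 0, 0, 0] := by
  induction k with
  | zero =>
      funext s
      fin_cases s <;>
        simp [signedCount, Matrix.mulVec, dotProduct, Fin.sum_univ_succ] <;> decide
  | succ k ih =>
      rw [Function.iterate_succ_apply', step, ih, pow_succ', Matrix.mulVec_mulVec]
end

section
/- Let R_c = [[0,1,0,1],[-1,0,-1,0],[1,0,0,1],[0,1,-1,0]] (block realification of R' = iI + R for R = [[0,i],[1,0]], the replacement matrix of x² − i). With w^0 = (1,0,0,0)^T and w^k = R_c^k w^0 = (u_1^k, v_1^k, u_2^k, v_2^k), the sequence (u_1^k − i v_1^k)/(u_2^k − i v_2^k) converges to (1+i)/√2 as k → ∞. -/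
open Filter Complex

noncomputable def mu : ℂ := (1 + Complex.I) / (Real.sqrt 2 : ℝ)

lemma hs_pos : (0:ℝ) < Real.sqrt 2 := Real.sqrt_pos.mpr (by norm_num)

lemma hsC : ((Real.sqrt 2 : ℝ) : ℂ) ≠ 0 := by exact_mod_cast hs_pos.ne'

lemma inv_sqrt2 : (Real.sqrt 2)⁻¹ = Real.sqrt 2 / 2 := by
  rw [eq_div_iff (by norm_num : (2:ℝ) ≠ 0), inv_mul_eq_div, div_eq_iff hs_pos.ne',
    Real.mul_self_sqrt (by norm_num : (0:ℝ) ≤ 2)]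

lemma mu_eq : mu = (((Real.sqrt 2)⁻¹ : ℝ) : ℂ) + (((Real.sqrt 2)⁻¹ : ℝ) : ℂ) * Complex.I := by
  rw [mu]; push_cast; field_simp

lemma mu_re : mu.re = (Real.sqrt 2)⁻¹ := by simp [mu_eq, inv_sqrt2]
lemma mu_im : mu.im = (Real.sqrt 2)⁻¹ := by simp [mu_eq, inv_sqrt2]

lemma mu_sq : mu ^ 2 = Complex.I := by
  rw [mu, div_pow]
  have h1 : ((Real.sqrt 2 : ℝ) : ℂ) ^ 2 = 2 := by
    rw [← Complex.ofReal_pow, Real.sq_sqrt (by norm_num : (0:ℝ) ≤ 2)]; norm_num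
  have h2 : (1 + Complex.I) ^ 2 = 2 * Complex.I := by
    ring_nf
    simp [Complex.I_sq]
  rw [h1, h2]; field_simp

lemma mu_ne : mu ≠ 0 := by
  intro h
  have := mu_re
  rw [h] at this
  simp at this
  exact hs_pos.ne this

noncomputable def lamP : ℂ := Complex.I + mu
noncomputable def lamM : ℂ := Complex.I - mu

lemma lp_re : lamP.re = (Real.sqrt 2)⁻¹ := by simp [lamP, mu_re]
lemma lp_im : lamP.im = 1 + (Real.sqrt 2)⁻¹ := by simp [lamP, mu_im]
lemma lm_re : lamM.re = -(Real.sqrt 2)⁻¹ := by simp [lamM, mu_re]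
lemma lm_im : lamM.im = 1 - (Real.sqrt 2)⁻¹ := by simp [lamM, mu_im]

lemma lp_ne : lamP ≠ 0 := by
  intro h
  have := lp_im
  rw [h] at this
  simp at this
  have : (0:ℝ) < (Real.sqrt 2)⁻¹ := inv_pos.mpr hs_pos
  linarith [this, lp_im]

lemma abs_lm_lt : ‖lamM‖ < ‖lamP‖ := by
  rw [Complex.norm_def, Complex.norm_def]
  apply Real.sqrt_lt_sqrt (Complex.normSq_nonneg _)
  rw [Complex.normSq_apply, Complex.normSq_apply, lp_re, lp_im, lm_re, lm_im]
  have h : (0:ℝ) < (Real.sqrt 2)⁻¹ := inv_pos.mpr hs_pos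
  nlinarith

def RcM : Matrix (Fin 4) (Fin 4) ℝ :=
  !![0, 1, 0, 1; -1, 0, -1, 0; 1, 0, 0, 1; 0, 1, -1, 0]

noncomputable def wv (k : ℕ) : Fin 4 → ℝ := (RcM ^ k).mulVec ![1, 0, 0, 0]

lemma wv_zero : wv 0 = ![1, 0, 0, 0] := by
  simp [wv, Matrix.one_mulVec]

lemma wv_succ (k : ℕ) : wv (k+1) = RcM.mulVec (wv k) := by
  rw [wv, wv, pow_succ', Matrix.mulVec_mulVec]

lemma wv_succ0 (k : ℕ) : wv (k+1) 0 = wv k 1 + wv k 3 := by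
  rw [wv_succ]; simp [RcM, Matrix.mulVec, dotProduct, Fin.sum_univ_four]

lemma wv_succ1 (k : ℕ) : wv (k+1) 1 = -(wv k 0) - wv k 2 := by
  rw [wv_succ]; simp [RcM, Matrix.mulVec, dotProduct, Fin.sum_univ_four]; ring

lemma wv_succ2 (k : ℕ) : wv (k+1) 2 = wv k 0 + wv k 3 := by
  rw [wv_succ]; simp [RcM, Matrix.mulVec, dotProduct, Fin.sum_univ_four]

lemma wv_succ3 (k : ℕ) : wv (k+1) 3 = wv k 1 - wv k 2 := by
  rw [wv_succ]; simp [RcM, Matrix.mulVec, dotProduct, Fin.sum_univ_four]; ring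

lemma closed_form (k : ℕ) :
    ((wv k 0 : ℂ) - Complex.I * (wv k 1 : ℂ) = (lamP ^ k + lamM ^ k) / 2) ∧
    ((wv k 2 : ℂ) - Complex.I * (wv k 3 : ℂ) = (lamP ^ k - lamM ^ k) / (2 * mu)) := by
  induction k with
  | zero => simp [wv_zero]
  | succ k ih =>
    obtain ⟨hA, hB⟩ := ih
    have e0 := wv_succ0 k
    have e1 := wv_succ1 k
    have e2 := wv_succ2 k
    have e3 := wv_succ3 k
    constructor
    · rw [e0, e1]
      push_cast
      have : ((wv k 1 : ℂ) + wv k 3) - Complex.I * (-(wv k 0) - wv k 2)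
          = Complex.I * ((wv k 0 : ℂ) - Complex.I * wv k 1)
            + Complex.I * ((wv k 2 : ℂ) - Complex.I * wv k 3) := by
        have hI := Complex.I_mul_I
        ring_nf
        rw [Complex.I_sq]
        ring
      rw [this, hA, hB, pow_succ, pow_succ, lamP, lamM,
        show Complex.I = mu ^ 2 from mu_sq.symm]
      field_simp
      have h1 : mu ^ 2 * mu⁻¹ = mu := by
        rw [pow_two, mul_assoc, mul_inv_cancel₀ mu_ne, mul_one]
      have h2 : mu * mu⁻¹ = 1 := mul_inv_cancel₀ mu_ne
      ring_nf
      try ring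
    · rw [e2, e3]
      push_cast
      have : ((wv k 0 : ℂ) + wv k 3) - Complex.I * ((wv k 1 : ℂ) - wv k 2)
          = ((wv k 0 : ℂ) - Complex.I * wv k 1)
            + Complex.I * ((wv k 2 : ℂ) - Complex.I * wv k 3) := by
        ring_nf
        rw [Complex.I_sq]
        ring
      rw [this, hA, hB, pow_succ, pow_succ, lamP, lamM,
        show Complex.I = mu ^ 2 from mu_sq.symm]
      field_simp
      have h1 : mu ^ 2 * mu⁻¹ = mu := by
        rw [pow_two, mul_assoc, mul_inv_cancel₀ mu_ne, mul_one]
      have h2 : mu * mu⁻¹ = 1 := mul_inv_cancel₀ mu_ne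
      ring_nf
      simp only [h1, h2]
      try ring

open Filter in
theorem stmt16 :
    let Rc : Matrix (Fin 4) (Fin 4) ℝ :=
      !![0, 1, 0, 1; -1, 0, -1, 0; 1, 0, 0, 1; 0, 1, -1, 0]
    let w : ℕ → Fin 4 → ℝ := fun k => (Rc ^ k).mulVec ![1, 0, 0, 0]
    Tendsto (fun k =>
        ((w k 0 : ℂ) - Complex.I * (w k 1 : ℂ)) /
        ((w k 2 : ℂ) - Complex.I * (w k 3 : ℂ)))
      atTop (nhds ((1 + Complex.I) / Real.sqrt 2)) := by
  intro Rc w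
  have hw : ∀ k i, w k i = wv k i := fun k i => rfl
  have hlt : ‖lamM / lamP‖ < 1 := by
    rw [norm_div, div_lt_one (by simpa [norm_pos_iff] using lp_ne)]
    simpa using abs_lm_lt
  have h0 : Tendsto (fun k : ℕ => (lamM / lamP) ^ k) atTop (nhds 0) :=
    tendsto_pow_atTop_nhds_zero_of_norm_lt_one hlt
  have hlim : Tendsto (fun k : ℕ => mu * (1 + (lamM / lamP) ^ k) / (1 - (lamM / lamP) ^ k))
      atTop (nhds mu) := by
    have := ((tendsto_const_nhds (x := mu)).mul ((tendsto_const_nhds (x := (1:ℂ))).add h0)).div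
      ((tendsto_const_nhds (x := (1:ℂ))).sub h0) (by norm_num)
    simpa [Pi.div_def] using this
  have heq : ∀ k : ℕ,
      mu * (1 + (lamM / lamP) ^ k) / (1 - (lamM / lamP) ^ k) =
      ((w k 0 : ℂ) - Complex.I * (w k 1 : ℂ)) /
        ((w k 2 : ℂ) - Complex.I * (w k 3 : ℂ)) := by
    intro k
    obtain ⟨hA, hB⟩ := closed_form k
    rw [hw k 0, hw k 1, hw k 2, hw k 3, hA, hB, div_pow]
    have hX : lamP ^ k ≠ 0 := pow_ne_zero _ lp_ne
    rcases eq_or_ne (lamP ^ k - lamM ^ k) 0 with h | h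
    · have hXY : lamM ^ k = lamP ^ k := by linear_combination -h
      rw [h, hXY, div_self hX, zero_div]
      simp
    · field_simp
  have : Tendsto (fun k =>
      ((w k 0 : ℂ) - Complex.I * (w k 1 : ℂ)) /
        ((w k 2 : ℂ) - Complex.I * (w k 3 : ℂ))) atTop (nhds mu) :=
    hlim.congr heq
  exact this
end
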